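/- Let m, n, T be positive integers at least 2, and set ℓ_x = ⌈log₂ x⌉. Then (ℓ_m² + ℓ_m)/4 · m·T·(n−1) + (T−1)(n−1) ≤ (ℓ_{mnT}² + ℓ_{mnT})/4 · m·n·T, i.e., the per-client threshold determination of Starfish uses no more secure comparisons than sorting all mnT historical gradient entries at once. -/

import Mathlib

/-- The per-client threshold determination of Starfish uses no more secure comparisons
than sorting all `mnT` historical gradient entries at once:
`(ℓ_m² + ℓ_m)/4·m·T·(n−1) + (T−1)(n−1) ≤ (ℓ_{mnT}² + ℓ_{mnT})/4·m·n·T`,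
where `ℓ_x = ⌈log₂ x⌉`. -/
theorem stmt_15 (m n T : ℕ) (hm : 2 ≤ m) (hn : 2 ≤ n) (hT : 2 ≤ T) :
    ((Nat.clog 2 m : ℝ) ^ 2 + (Nat.clog 2 m : ℝ)) / 4 * m * T * ((n : ℝ) - 1) +
        ((T : ℝ) - 1) * ((n : ℝ) - 1) ≤
      ((Nat.clog 2 (m * n * T) : ℝ) ^ 2 + (Nat.clog 2 (m * n * T) : ℝ)) / 4 *
        m * n * T := by
  set a := Nat.clog 2 m with ha
  set b := Nat.clog 2 (m * n * T) with hb
  have ha1 : 1 ≤ a := Nat.clog_pos one_lt_two hm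
  have hpred : 2 ^ (a - 1) < m := Nat.pow_pred_clog_lt_self one_lt_two hm
  have hab : a + 2 ≤ b := by
    have h1 : 2 ^ (a + 1) < m * n * T := by
      have : 2 ^ (a + 1) = 4 * 2 ^ (a - 1) := by
        rw [show a + 1 = (a - 1) + 2 by omega]; ring
      calc 2 ^ (a + 1) = 4 * 2 ^ (a - 1) := this
        _ < 4 * m := by omega
        _ = m * 2 * 2 := by ring
        _ ≤ m * n * T := Nat.mul_le_mul (Nat.mul_le_mul_left m hn) hT
    have := (Nat.lt_clog_iff_pow_lt one_lt_two).mpr h1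
    omega
  have hA : (1 : ℝ) ≤ (a : ℝ) := by exact_mod_cast ha1
  have hB : (a : ℝ) + 2 ≤ (b : ℝ) := by exact_mod_cast hab
  have hmr : (2 : ℝ) ≤ m := by exact_mod_cast hm
  have hnr : (2 : ℝ) ≤ n := by exact_mod_cast hn
  have hTr : (2 : ℝ) ≤ T := by exact_mod_cast hT
  have h0 : (0:ℝ) ≤ (b:ℝ) ^ 2 + (b:ℝ) - ((a:ℝ)^2 + 5*a + 6) := by nlinarith [sq_nonneg ((b:ℝ) - (a:ℝ) - 2)]
  have hmnT : (0:ℝ) ≤ (m:ℝ) * n * T := by positivity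
  nlinarith [mul_nonneg h0 hmnT,
    mul_nonneg (mul_nonneg (by positivity : (0:ℝ) ≤ (a:ℝ)^2 + a) (by linarith : (0:ℝ) ≤ (m:ℝ))) (by linarith : (0:ℝ) ≤ (T:ℝ)),
    mul_nonneg (by linarith : (0:ℝ) ≤ (a:ℝ) - 1) hmnT,
    mul_nonneg (mul_nonneg (by linarith : (0:ℝ) ≤ (m:ℝ) - 2) (by linarith : (0:ℝ) ≤ (n:ℝ))) (by linarith : (0:ℝ) ≤ (T:ℝ)),
    mul_nonneg (by linarith : (0:ℝ) ≤ (n:ℝ)) (by linarith : (0:ℝ) ≤ (T:ℝ))]
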